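/- Let P₁ = ⋂_{i=1,…,n} H_i and P₂ = ⋂_{i=n+1,…,n+m} H_i be two disjoint nonempty convex subsets of ℝ², each given as a finite intersection of closed half-planes H₁, …, H_{n+m}. Then some H_i (1 ≤ i ≤ n+m) separates P₁ and P₂: there is an index i such that one of the two sets is contained in H_i and the other is disjoint from H_i. -/
import Mathlib


open scoped RealInnerProductSpace

/-- Points of the Euclidean plane. -/
abbrev Pt := EuclideanSpace ℝ (Fin 2)

/-- The closed half-plane `{x : ⟨a, x⟩ ≤ b}`. -/
def HalfPlane (a : Pt) (b : ℝ) : Set Pt := {x | ⟪a, x⟫ ≤ b}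

lemma halfPlane_convex (a : Pt) (b : ℝ) : Convex ℝ (HalfPlane a b) :=
  convex_halfSpace_le ⟨fun x y => inner_add_right a x y, fun c x => real_inner_smul_right a x c⟩ b

/-- Let `P₁ = ⋂_{i < n} H i` and `P₂ = ⋂_{n ≤ i < n+m} H i` be two
disjoint nonempty (convex) subsets of the plane, each a finite intersection of closed
half-planes.  Then one of the half-planes separates them: some `H i` with `i < n` is
disjoint from `P₂`, or some `H i` with `n ≤ i` is disjoint from `P₁`. -/
theorem halfplane_separation (n m : ℕ) (a : Fin (n + m) → Pt) (b : Fin (n + m) → ℝ)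
    (ha : ∀ i, a i ≠ 0) (P₁ P₂ : Set Pt)
    (hP₁ : P₁ = ⋂ i ∈ {i : Fin (n + m) | (i : ℕ) < n}, HalfPlane (a i) (b i))
    (hP₂ : P₂ = ⋂ i ∈ {i : Fin (n + m) | n ≤ (i : ℕ)}, HalfPlane (a i) (b i))
    (h₁ : P₁.Nonempty) (h₂ : P₂.Nonempty) (hdisj : Disjoint P₁ P₂) :
    ∃ i : Fin (n + m),
      ((i : ℕ) < n ∧ P₂ ∩ HalfPlane (a i) (b i) = ∅) ∨
      (n ≤ (i : ℕ) ∧ P₁ ∩ HalfPlane (a i) (b i) = ∅) := by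
  classical
  -- P₁ is contained in each H i for i < n, and P₂ in each H i for n ≤ i
  have hsub₁ : ∀ i : Fin (n + m), (i : ℕ) < n → P₁ ⊆ HalfPlane (a i) (b i) := by
    intro i hi
    rw [hP₁]
    exact Set.biInter_subset_of_mem hi
  have hsub₂ : ∀ i : Fin (n + m), n ≤ (i : ℕ) → P₂ ⊆ HalfPlane (a i) (b i) := by
    intro i hi
    rw [hP₂]
    exact Set.biInter_subset_of_mem hi
  -- the intersection of all half-planes is P₁ ∩ P₂, which is empty
  have hall : (⋂ i ∈ (Finset.univ : Finset (Fin (n + m))), HalfPlane (a i) (b i)) = ∅ := by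
    have h : (⋂ i ∈ (Finset.univ : Finset (Fin (n + m))), HalfPlane (a i) (b i)) ⊆ P₁ ∩ P₂ := by
      intro x hx
      simp only [Set.mem_iInter, Finset.mem_univ, forall_true_left] at hx
      constructor
      · rw [hP₁]; exact Set.mem_biInter fun i _ => hx i
      · rw [hP₂]; exact Set.mem_biInter fun i _ => hx i
    rw [Set.disjoint_iff_inter_eq_empty] at hdisj
    exact Set.subset_empty_iff.mp (hdisj ▸ h)
  -- By (the contrapositive of) Helly's theorem, some subfamily of ≤ 3 half-planes is empty
  have hrank : Module.finrank ℝ Pt = 2 := finrank_euclideanSpace_fin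
  have hHelly := Convex.helly_theorem' (𝕜 := ℝ) (F := fun i => HalfPlane (a i) (b i))
    (s := (Finset.univ : Finset (Fin (n + m)))) (fun i _ => halfPlane_convex (a i) (b i))
  have : ¬ (⋂ i ∈ (Finset.univ : Finset (Fin (n + m))), HalfPlane (a i) (b i)).Nonempty := by
    rw [hall]; exact Set.not_nonempty_empty
  have hex : ∃ I : Finset (Fin (n + m)), I ⊆ Finset.univ ∧ I.card ≤ Module.finrank ℝ Pt + 1 ∧
      ¬ (⋂ i ∈ I, HalfPlane (a i) (b i)).Nonempty := by
    by_contra hc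
    push_neg at hc
    exact this (hHelly fun I hI hcard => hc I hI hcard)
  obtain ⟨I, -, hcard, hIempty⟩ := hex
  rw [hrank] at hcard
  rw [Set.not_nonempty_iff_eq_empty] at hIempty
  set I₁ := I.filter (fun i : Fin (n + m) => (i : ℕ) < n) with hI₁
  set I₂ := I.filter (fun i : Fin (n + m) => n ≤ (i : ℕ)) with hI₂
  have hIunion : I₁ ∪ I₂ = I := by
    ext i
    simp only [hI₁, hI₂, Finset.mem_union, Finset.mem_filter, ← and_or_left]
    exact and_iff_left (lt_or_ge _ _)
  -- both I₁ and I₂ are nonempty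
  have hne₁ : I₁.Nonempty := by
    by_contra hI1e
    rw [Finset.not_nonempty_iff_eq_empty] at hI1e
    -- then I = I₂ and P₂ ⊆ ⋂_{i ∈ I} H i = ∅
    obtain ⟨x, hx⟩ := h₂
    have : x ∈ ⋂ i ∈ I, HalfPlane (a i) (b i) := by
      refine Set.mem_biInter fun i hi => ?_
      have : i ∈ I₂ := by
        rw [← hIunion] at hi; simpa [hI1e] using hi
      exact hsub₂ i (Finset.mem_filter.mp this).2 hx
    rw [hIempty] at this; exact this
  have hne₂ : I₂.Nonempty := by
    by_contra hI2e
    rw [Finset.not_nonempty_iff_eq_empty] at hI2e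
    obtain ⟨x, hx⟩ := h₁
    have : x ∈ ⋂ i ∈ I, HalfPlane (a i) (b i) := by
      refine Set.mem_biInter fun i hi => ?_
      have : i ∈ I₁ := by
        rw [← hIunion] at hi; simpa [hI2e] using hi
      exact hsub₁ i (Finset.mem_filter.mp this).2 hx
    rw [hIempty] at this; exact this
  have hdisjI : Disjoint I₁ I₂ := by
    rw [Finset.disjoint_filter]; omega
  have hcards : I₁.card + I₂.card ≤ 3 := by
    rw [← Finset.card_union_of_disjoint hdisjI, hIunion]; omega
  -- one of I₁, I₂ is a singleton
  have hone : I₁.card = 1 ∨ I₂.card = 1 := by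
    have c1 := Finset.card_pos.mpr hne₁
    have c2 := Finset.card_pos.mpr hne₂
    omega
  rcases hone with hc1 | hc2
  · -- I₁ = {j}, j < n ; then P₂ ∩ H j = ∅
    obtain ⟨j, hj⟩ := Finset.card_eq_one.mp hc1
    have hjn : (j : ℕ) < n := by
      have : j ∈ I₁ := hj ▸ Finset.mem_singleton_self j
      exact (Finset.mem_filter.mp this).2
    refine ⟨j, Or.inl ⟨hjn, ?_⟩⟩
    rw [Set.eq_empty_iff_forall_notMem]
    rintro x ⟨hxP₂, hxH⟩
    have : x ∈ ⋂ i ∈ I, HalfPlane (a i) (b i) := by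
      refine Set.mem_biInter fun i hi => ?_
      rw [← hIunion] at hi
      rcases Finset.mem_union.mp hi with h | h
      · rw [hj, Finset.mem_singleton] at h; rw [h]; exact hxH
      · exact hsub₂ i (Finset.mem_filter.mp h).2 hxP₂
    rw [hIempty] at this; exact this
  · obtain ⟨j, hj⟩ := Finset.card_eq_one.mp hc2
    have hjn : n ≤ (j : ℕ) := by
      have : j ∈ I₂ := hj ▸ Finset.mem_singleton_self j
      exact (Finset.mem_filter.mp this).2
    refine ⟨j, Or.inr ⟨hjn, ?_⟩⟩
    rw [Set.eq_empty_iff_forall_notMem]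
    rintro x ⟨hxP₁, hxH⟩
    have : x ∈ ⋂ i ∈ I, HalfPlane (a i) (b i) := by
      refine Set.mem_biInter fun i hi => ?_
      rw [← hIunion] at hi
      rcases Finset.mem_union.mp hi with h | h
      · exact hsub₁ i (Finset.mem_filter.mp h).2 hxP₁
      · rw [hj, Finset.mem_singleton] at h; rw [h]; exact hxH
    rw [hIempty] at this; exact this
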